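/- In an MVR chain graph G, every chain component T forms a head with tail equal to its parent set: (1) T = barren(T), i.e., no vertex of T has a proper descendant in T; (2) T is contained in a single district of the induced subgraph of G on an(T); and (3) dis_{an(T)}(T) = T, so that tail(T) = (dis_{an(T)}(T) \ T) ∪ pa_G(dis_{an(T)}(T)) = pa_G(T). -/

import Mathlib

open scoped Classical

universe u

variable {V : Type u}

/-- A mixed graph: a set of directed edges and a set of bidirected edges on `V`. -/
structure MixedGraph (V : Type u) where
  /-- `dir u v` means there is a directed edge `u → v`. -/
  dir : V → V → Prop
  /-- `bi u v` means there is a bidirected edge `u ↔ v`. -/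
  bi : V → V → Prop

namespace MixedGraph

/-- The basic well-formedness conditions of a mixed graph with only directed and
bidirected edges: `bi` is symmetric and irreflexive, `dir` is irreflexive, there are no
self-loops and at most one edge between each pair of distinct vertices. -/
def IsMixed (G : MixedGraph V) : Prop :=
  (∀ u v, G.bi u v → G.bi v u) ∧
  (∀ v, ¬ G.bi v v) ∧
  (∀ v, ¬ G.dir v v) ∧
  (∀ u v, G.dir u v → ¬ G.bi u v) ∧
  (∀ u v, G.dir u v → ¬ G.dir v u)

/-- A partially directed cycle: vertices `f 0, f 1, …, f n = f 0` (`n ≥ 2`,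
`f 0, …, f (n-1)` distinct) such that every step is a directed edge `f i → f (i+1)` or a
bidirected edge, and at least one step is directed. -/
def HasPDCycle (G : MixedGraph V) : Prop :=
  ∃ (n : ℕ) (f : ℕ → V), 2 ≤ n ∧ f n = f 0 ∧
    (∀ i j, i < n → j < n → f i = f j → i = j) ∧
    (∀ i, i < n → G.dir (f i) (f (i + 1)) ∨ G.bi (f i) (f (i + 1))) ∧
    (∃ i, i < n ∧ G.dir (f i) (f (i + 1)))

/-- An MVR chain graph: a mixed graph containing only directed and bidirected edges and
having no partially directed cycle. -/
def IsMVR (G : MixedGraph V) : Prop := G.IsMixed ∧ ¬ G.HasPDCycle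

/-- `G.anc u v` : `u` is an ancestor of `v` (`u = v` or there is a directed path
`u → ⋯ → v`). -/
def anc (G : MixedGraph V) (u v : V) : Prop := Relation.ReflTransGen G.dir u v

/-- `an(S)`: the set of ancestors of members of `S`. -/
def ancSet (G : MixedGraph V) (S : Set V) : Set V := {u | ∃ s ∈ S, G.anc u s}

/-- The descendants of `v`. -/
def de (G : MixedGraph V) (v : V) : Set V := {u | G.anc v u}

/-- The non-descendants of `v` : `V \ (de(v) ∪ {v})`. -/
def nd (G : MixedGraph V) (v : V) : Set V := {u | ¬ G.anc v u}

/-- Adjacency: some edge joins `u` and `v`. -/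
def adj (G : MixedGraph V) (u v : V) : Prop := G.dir u v ∨ G.dir v u ∨ G.bi u v

/-- `f 0, …, f n` is a walk: consecutive vertices are joined by some edge. -/
def IsWalk (G : MixedGraph V) (n : ℕ) (f : ℕ → V) : Prop :=
  ∀ i, i < n → G.adj (f i) (f (i + 1))

/-- `f 0, …, f n` is a path: a walk with distinct vertices. -/
def IsPath (G : MixedGraph V) (n : ℕ) (f : ℕ → V) : Prop :=
  G.IsWalk n f ∧ ∀ i j, i ≤ n → j ≤ n → f i = f j → i = j

/-- The nonendpoint vertex `f i` (`0 < i < n`) of a path is a collider: both incident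
edges of the path have an arrowhead at `f i`, i.e. the edge from `f (i-1)` is
`f (i-1) → f i` or `f (i-1) ↔ f i`, and the edge to `f (i+1)` is `f i ← f (i+1)` or
`f i ↔ f (i+1)`. -/
def IsColliderAt (G : MixedGraph V) (f : ℕ → V) (i : ℕ) : Prop :=
  (G.dir (f (i - 1)) (f i) ∨ G.bi (f (i - 1)) (f i)) ∧
  (G.dir (f (i + 1)) (f i) ∨ G.bi (f i) (f (i + 1)))

/-- A path between `α` and `β` is m-connecting given `Z` if every noncollider on it is
not in `Z` and every collider on it is in `an(Z)`. -/
def MConnecting (G : MixedGraph V) (Z : Set V) (α β : V) : Prop :=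
  ∃ (n : ℕ) (f : ℕ → V), G.IsPath n f ∧ f 0 = α ∧ f n = β ∧
    ∀ i, 0 < i → i < n →
      (G.IsColliderAt f i → f i ∈ G.ancSet Z) ∧ (¬ G.IsColliderAt f i → f i ∉ Z)

/-- `X` and `Y` are m-separated given `Z`: no m-connecting path given `Z` joins a vertex
of `X` to a vertex of `Y`. -/
def MSep (G : MixedGraph V) (X Y Z : Set V) : Prop :=
  ∀ α ∈ X, ∀ β ∈ Y, ¬ G.MConnecting Z α β

/-- The induced subgraph of `G` on the vertex set `A` (kept on the same vertex type:
only edges with both endpoints in `A` remain). -/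
def induce (G : MixedGraph V) (A : Set V) : MixedGraph V where
  dir u v := u ∈ A ∧ v ∈ A ∧ G.dir u v
  bi u v := u ∈ A ∧ v ∈ A ∧ G.bi u v

/-- Two vertices are collider connected if joined by a path on which every nonendpoint
vertex is a collider (a single edge counts). -/
def ColliderConnected (G : MixedGraph V) (x y : V) : Prop :=
  ∃ (n : ℕ) (f : ℕ → V), 1 ≤ n ∧ G.IsPath n f ∧ f 0 = x ∧ f n = y ∧
    ∀ i, 0 < i → i < n → G.IsColliderAt f i

end MixedGraph

/-- `Z` separates `X` from `Y` in the undirected graph with adjacency `E` : every path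
from `X` to `Y` meets `Z`. -/
def UndirSep {V : Type u} (E : V → V → Prop) (X Y Z : Set V) : Prop :=
  ∀ (n : ℕ) (f : ℕ → V), (∀ i, i < n → E (f i) (f (i + 1))) →
    (∀ i j, i ≤ n → j ≤ n → f i = f j → i = j) →
    f 0 ∈ X → f n ∈ Y → ∃ i, i ≤ n ∧ f i ∈ Z

namespace MixedGraph

/-- Augmented-graph separation (m*-separation): `Z` separates `X` from `Y` in the
augmented graph (whose edges join the collider-connected pairs) of the induced subgraph
of `G` on `an(X ∪ Y ∪ Z)`. -/
def AugSep (G : MixedGraph V) (X Y Z : Set V) : Prop :=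
  UndirSep (fun a b => (G.induce (G.ancSet (X ∪ Y ∪ Z))).ColliderConnected a b) X Y Z

/-- Connectivity in the bidirected part of `G`. -/
def biConn (G : MixedGraph V) (u v : V) : Prop := Relation.ReflTransGen G.bi u v

/-- The chain component of `v`: the connected component of `v` in the bidirected part. -/
def chainComp (G : MixedGraph V) (v : V) : Set V := {u | G.biConn v u}

/-- `T` is a chain component of `G`. -/
def IsChainComp (G : MixedGraph V) (T : Set V) : Prop := ∃ v, T = G.chainComp v

/-- The parents of a vertex: `pa_G(v) = {w : w → v}`. -/
def pa (G : MixedGraph V) (v : V) : Set V := {w | G.dir w v}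

/-- The boundary of a vertex: parents and bidirected neighbours. -/
def bd (G : MixedGraph V) (v : V) : Set V := {w | G.dir w v ∨ G.bi w v}

/-- The parents of a set: `pa_G(A) = {w ∉ A : w → v for some v ∈ A}`. -/
def paSet (G : MixedGraph V) (A : Set V) : Set V := {w | w ∉ A ∧ ∃ v ∈ A, G.dir w v}

/-- `Nb_G(A)`: `A` together with all vertices joined to `A` by a bidirected edge. -/
def Nb (G : MixedGraph V) (A : Set V) : Set V := A ∪ {w | ∃ v ∈ A, G.bi w v}

/-- The edge relation of the directed graph `D` of chain components:
`C₁ → C₂` iff they are distinct chain components and some directed edge of `G` joins a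
vertex of `C₁` to a vertex of `C₂`. -/
def compRel (G : MixedGraph V) (C₁ C₂ : Set V) : Prop :=
  G.IsChainComp C₁ ∧ G.IsChainComp C₂ ∧ C₁ ≠ C₂ ∧ ∃ u ∈ C₁, ∃ v ∈ C₂, G.dir u v

/-- `pa_D(T)`: the union of the chain components that are parents of `T` in the directed
graph `D` of chain components. -/
def paD (G : MixedGraph V) (T : Set V) : Set V := {w | G.compRel (G.chainComp w) T}

/-- `nd_D(T)`: the union of the chain components `T'` such that there is no directed path
from `T` to `T'` in the directed graph `D` of chain components. -/
def ndD (G : MixedGraph V) (T : Set V) : Set V :=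
  {w | ¬ Relation.ReflTransGen G.compRel T (G.chainComp w)}

/-- Connectivity in the bidirected part of the induced subgraph on `A`. -/
def biConnIn (G : MixedGraph V) (A : Set V) (u v : V) : Prop :=
  Relation.ReflTransGen (fun a b => a ∈ A ∧ b ∈ A ∧ G.bi a b) u v

/-- `A` is connected: the bidirected part of the induced subgraph on `A` is connected
(and `A` is nonempty). -/
def ConnectedIn (G : MixedGraph V) (A : Set V) : Prop :=
  A.Nonempty ∧ ∀ u ∈ A, ∀ v ∈ A, G.biConnIn A u v

/-- `dis_{G_A}(x)`: the connected component (district) of `x` in the bidirected part of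
the induced subgraph `G_A`. -/
def disIn (G : MixedGraph V) (A : Set V) (x : V) : Set V := {y | G.biConnIn A x y}

/-- The Markov blanket `mb(x, A) = pa_G(dis_{G_A}(x)) ∪ (dis_{G_A}(x) \ {x})`. -/
def mb (G : MixedGraph V) (x : V) (A : Set V) : Set V :=
  G.paSet (G.disIn A x) ∪ (G.disIn A x \ {x})

/-- `pre(T)` relative to an order `r` on chain components: the union of all chain
components strictly preceding `T`. -/
def pre (G : MixedGraph V) (r : Set V → Set V → Prop) (T : Set V) : Set V :=
  {v | r (G.chainComp v) T}

/-- `r` is a strict total order on the chain components of `G` that is consistent with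
the directed graph `D` of chain components, i.e. `pa_D(T) ⊆ pre(T)` for all `T`. -/
def ConsistentCompOrder (G : MixedGraph V) (r : Set V → Set V → Prop) : Prop :=
  (∀ C, ¬ r C C) ∧
  (∀ C₁ C₂ C₃, r C₁ C₂ → r C₂ C₃ → r C₁ C₃) ∧
  (∀ C₁ C₂, G.IsChainComp C₁ → G.IsChainComp C₂ → C₁ = C₂ ∨ r C₁ C₂ ∨ r C₂ C₁) ∧
  (∀ T, G.IsChainComp T → G.paD T ⊆ G.pre r T)

/-- A total order `r` on the vertices of `G` is consistent with `G` if `r x y` implies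
that `y` is not an ancestor of `x`. -/
def ConsistentVertexOrder (G : MixedGraph V) (r : V → V → Prop) : Prop :=
  IsStrictTotalOrder V r ∧ ∀ x y, r x y → ¬ G.anc y x

end MixedGraph

section IndepModel

variable {V : Type u} (I : Set V → Set V → Set V → Prop)

/-- Symmetry: `X ⫫ Y | Z  ⇒  Y ⫫ X | Z`. -/
def IndepSymm : Prop := ∀ X Y Z : Set V, I X Y Z → I Y X Z

/-- Decomposition: `X ⫫ Y ∪ W | Z  ⇒  X ⫫ Y | Z`. -/
def IndepDecomp : Prop := ∀ X Y W Z : Set V, I X (Y ∪ W) Z → I X Y Z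

/-- Weak union: `X ⫫ Y ∪ W | Z  ⇒  X ⫫ Y | Z ∪ W`. -/
def IndepWeakUnion : Prop := ∀ X Y W Z : Set V, I X (Y ∪ W) Z → I X Y (Z ∪ W)

/-- Contraction: `X ⫫ Y | Z ∪ W` and `X ⫫ W | Z` imply `X ⫫ Y ∪ W | Z`. -/
def IndepContraction : Prop := ∀ X Y W Z : Set V, I X Y (Z ∪ W) → I X W Z → I X (Y ∪ W) Z

/-- Composition: `X ⫫ Y | Z` and `X ⫫ W | Z` imply `X ⫫ Y ∪ W | Z`. -/
def IndepComposition : Prop := ∀ X Y W Z : Set V, I X Y Z → I X W Z → I X (Y ∪ W) Z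

/-- A semi-graphoid satisfies symmetry, decomposition, weak union and contraction. -/
def SemiGraphoid : Prop := IndepSymm I ∧ IndepDecomp I ∧ IndepWeakUnion I ∧ IndepContraction I

/-- A compositional semi-graphoid additionally satisfies composition. -/
def CompositionalSemiGraphoid : Prop := SemiGraphoid I ∧ IndepComposition I

variable (G : MixedGraph V)

/-- The global Markov property via m-separation: whenever `X` and `Y` are m-separated
given `Z` in `G` (for pairwise disjoint `X, Y, Z` with `X, Y` nonempty), `⟨X, Y | Z⟩ ∈ ℐ`. -/
def GlobalMarkovM : Prop :=
  ∀ X Y Z : Set V, X.Nonempty → Y.Nonempty →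
    Disjoint X Y → Disjoint X Z → Disjoint Y Z → G.MSep X Y Z → I X Y Z

/-- The global Markov property via augmented-graph separation: whenever `Z` separates `X`
from `Y` in the augmented graph of the induced subgraph of `G` on `an(X ∪ Y ∪ Z)` (for
pairwise disjoint `X, Y, Z` with `X, Y` nonempty), `⟨X, Y | Z⟩ ∈ ℐ`. -/
def GlobalMarkovAug : Prop :=
  ∀ X Y Z : Set V, X.Nonempty → Y.Nonempty →
    Disjoint X Y → Disjoint X Z → Disjoint Y Z → G.AugSep X Y Z → I X Y Z

/-- The block-recursive Markov property of type IV. -/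
def TypeIVMarkov : Prop :=
  ∀ T : Set V, G.IsChainComp T →
    (I T (G.ndD T \ G.paD T) (G.paD T)) ∧
    (∀ A : Set V, A ⊆ T → I A (G.paD T \ G.paSet A) (G.paSet A)) ∧
    (∀ A : Set V, A ⊆ T → G.ConnectedIn A → I A (T \ G.Nb A) (G.paD T))

/-- The multivariate regression (MR) Markov property with respect to the order `r` on the
chain components: (MR1) for connected `A ⊆ T`, `A ⫫ pre(T) \ pa_G(A) | pa_G(A)`; (MR2)
distinct connected components `A₁, A₂` of `A ⊆ T` satisfy `A₁ ⫫ A₂ | pre(T)`. -/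
def MRMarkov (r : Set V → Set V → Prop) : Prop :=
  ∀ T : Set V, G.IsChainComp T → ∀ A : Set V, A ⊆ T →
    (G.ConnectedIn A → I A (G.pre r T \ G.paSet A) (G.paSet A)) ∧
    (∀ x ∈ A, ∀ y ∈ A, G.disIn A x ≠ G.disIn A y →
      I (G.disIn A x) (G.disIn A y) (G.pre r T))

/-- The ordered local Markov property with respect to a total vertex order `r` : for every
vertex `x` and every ancestrally closed `A` with `x ∈ A ⊆ pre_{G,≺}(x)`,
`{x} ⫫ A \ (mb(x,A) ∪ {x}) | mb(x,A)`. -/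
def OrderedLocalMarkov (r : V → V → Prop) : Prop :=
  ∀ (x : V) (A : Set V), G.ancSet A = A → x ∈ A → A ⊆ {v | r v x ∨ v = x} →
    I {x} (A \ (G.mb x A ∪ {x})) (G.mb x A)

/-- The alternative local Markov property: for every vertex `v`,
`{v} ⫫ nd(v) \ bd(v) | pa_G(v)`. -/
def AltLocalMarkov : Prop :=
  ∀ v : V, I {v} (G.nd v \ G.bd v) (G.pa v)

end IndepModel

section AuxChain

variable {α : Type u} {R : α → α → Prop}

/-- Every chain can be shortened to a duplicate-free chain with the same endpoints. -/
lemma exists_nodup_chain_aux : ∀ (n : ℕ) (l : List α) (b : α), l.length = n →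
    List.Chain R b l →
    ∃ l', List.Chain R b l' ∧ l' ⊆ l ∧ (b :: l').Nodup ∧
      (b :: l').getLast (List.cons_ne_nil _ _) = (b :: l).getLast (List.cons_ne_nil _ _) := by
  intro n
  induction n using Nat.strong_induction_on with
  | _ n ih =>
    intro l b hlen hc
    by_cases hb : b ∈ l
    · obtain ⟨l₁, l₂, rfl⟩ := List.append_of_mem hb
      have hsplit := (List.isChain_cons_split.mp hc).2
      have hlt : l₂.length < n := by
        subst hlen; simp [List.length_append]; omega
      obtain ⟨l', h1, h2, h3, h4⟩ := ih l₂.length hlt l₂ b rfl hsplit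
      refine ⟨l', h1, ?_, h3, ?_⟩
      · exact List.Subset.trans h2 (List.Subset.trans (List.subset_cons_self _ _) (List.subset_append_right _ _))
      · rw [h4]
        exact (List.getLast_append_right (l := b :: l₁) (List.cons_ne_nil b l₂)).symm
    · cases l with
      | nil => exact ⟨[], List.Chain.nil, by simp, by simp, rfl⟩
      | cons c l'' =>
        unfold List.Chain at hc
        rw [List.chain_cons] at hc
        have hlt : l''.length < n := by subst hlen; simp
        obtain ⟨m, h1, h2, h3, h4⟩ := ih l''.length hlt l'' c rfl hc.2
        refine ⟨c :: m, List.Chain.cons hc.1 h1, List.cons_subset_cons _ h2, ?_, ?_⟩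
        · refine List.nodup_cons.mpr ⟨?_, h3⟩
          intro hmem
          rcases List.mem_cons.mp hmem with h | h
          · exact hb (h ▸ List.mem_cons_self)
          · exact hb (List.mem_cons_of_mem _ (h2 h))
        · rw [List.getLast_cons_cons, List.getLast_cons_cons, h4]

lemma exists_nodup_chain {a b : α} (h : Relation.ReflTransGen R b a) :
    ∃ l, List.Chain R b l ∧ (b :: l).Nodup ∧
      (b :: l).getLast (List.cons_ne_nil _ _) = a := by
  obtain ⟨l, hl, hlast⟩ := List.exists_isChain_cons_of_relationReflTransGen h
  obtain ⟨l', h1, _, h3, h4⟩ := exists_nodup_chain_aux l.length l b rfl hl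
  exact ⟨l', h1, h3, h4.trans hlast⟩

end AuxChain

namespace MixedGraph

/-- In an MVR chain graph, there is no directed edge `a → b` together with a
forward mixed walk from `b` back to `a`. -/
lemma no_return {V : Type u} {G : MixedGraph V} (hG : G.IsMVR) {a b : V}
    (hab : G.dir a b)
    (h : Relation.ReflTransGen (fun u v => G.dir u v ∨ G.bi u v) b a) : False := by
  obtain ⟨hmixed, hnpd⟩ := hG
  obtain ⟨_, _, hdirr, _, _⟩ := hmixed
  obtain ⟨l, hchain, hnodup, hlast⟩ := exists_nodup_chain h
  set P := b :: l with hP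
  have hne : a ≠ b := by rintro rfl; exact hdirr a hab
  have hlne : l ≠ [] := by
    rintro rfl
    simp [hP] at hlast
    exact hne hlast.symm
  set k := l.length with hk
  have hk1 : 1 ≤ k := by
    rw [hk]
    exact List.length_pos_iff.mpr hlne
  have hPlen : P.length = k + 1 := by simp [hP, hk]
  have hPk : P[k]'(by omega) = a := by
    rw [← hlast, List.getLast_eq_getElem]
    simp [hPlen]
    rfl
  apply hnpd
  refine ⟨k + 1, fun i => if i = 0 then a else P.getD (i - 1) a, by omega, ?_, ?_, ?_, ?_⟩
  · show (if k + 1 = 0 then a else P.getD (k + 1 - 1) a) = if 0 = 0 then a else P.getD (0 - 1) a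
    rw [if_neg (by omega), if_pos rfl, List.getD_eq_getElem _ _ (by omega : k + 1 - 1 < P.length)]
    simpa using hPk
  · intro i j hi hj hij
    by_cases hi0 : i = 0 <;> by_cases hj0 : j = 0
    · omega
    · exfalso
      simp only [hi0, if_true, hj0, if_false] at hij
      rw [List.getD_eq_getElem _ _ (by omega : j - 1 < P.length)] at hij
      have := (hnodup.getElem_inj_iff).mp (hPk.trans hij)
      omega
    · exfalso
      simp only [hj0, if_true, hi0, if_false] at hij
      rw [List.getD_eq_getElem _ _ (by omega : i - 1 < P.length)] at hij
      have := (hnodup.getElem_inj_iff).mp (hij.trans hPk.symm)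
      omega
    · simp only [hi0, hj0, if_false] at hij
      rw [List.getD_eq_getElem _ _ (by omega : i - 1 < P.length),
        List.getD_eq_getElem _ _ (by omega : j - 1 < P.length)] at hij
      have := (hnodup.getElem_inj_iff).mp hij
      omega
  · intro i hi
    by_cases hi0 : i = 0
    · subst hi0
      show G.dir (if 0 = 0 then a else P.getD (0-1) a) (if 1 = 0 then a else P.getD (1-1) a) ∨
        G.bi (if 0 = 0 then a else P.getD (0-1) a) (if 1 = 0 then a else P.getD (1-1) a)
      rw [if_pos rfl, if_neg (by omega), List.getD_eq_getElem _ _ (by omega : 1 - 1 < P.length)]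
      left
      simpa [hP] using hab
    · have hchain' : List.Chain' (fun u v => G.dir u v ∨ G.bi u v) P := hchain
      unfold List.Chain' at hchain'
      rw [List.isChain_iff_getElem] at hchain'
      have := hchain' (i - 1) (by omega)
      show G.dir (if i = 0 then a else P.getD (i-1) a) (if i + 1 = 0 then a else P.getD (i+1-1) a) ∨
        G.bi (if i = 0 then a else P.getD (i-1) a) (if i + 1 = 0 then a else P.getD (i+1-1) a)
      rw [if_neg hi0, if_neg (by omega),
        List.getD_eq_getElem _ _ (by omega : i - 1 < P.length),
        List.getD_eq_getElem _ _ (by omega : i + 1 - 1 < P.length)]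
      convert this using 3 <;> omega
  · refine ⟨0, by omega, ?_⟩
    show G.dir (if 0 = 0 then a else P.getD (0-1) a) (if 1 = 0 then a else P.getD (1-1) a)
    rw [if_pos rfl, if_neg (by omega), List.getD_eq_getElem _ _ (by omega : 1 - 1 < P.length)]
    simpa [hP] using hab

end MixedGraph


/-- In an MVR chain graph `G`, every chain component `T` forms a head
with tail equal to its parent set: (1) `T = barren(T)`, i.e. for every `x ∈ T`,
`de(x) ∩ T = {x}`; (2) `T` is contained in a single district of the induced subgraph of
`G` on `an(T)`; (3) `dis_{an(T)}(T) = T`, and consequently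
`tail(T) = (dis_{an(T)}(T) \ T) ∪ pa_G(dis_{an(T)}(T)) = pa_G(T)`. -/
theorem chain_component_head_tail {V : Type u} (G : MixedGraph V) (hG : G.IsMVR)
    (T : Set V) (hT : G.IsChainComp T) :
    (∀ x ∈ T, G.de x ∩ T = {x}) ∧
    (∃ x, T ⊆ G.disIn (G.ancSet T) x) ∧
    ((⋃ x ∈ T, G.disIn (G.ancSet T) x) = T ∧
      ((⋃ x ∈ T, G.disIn (G.ancSet T) x) \ T) ∪
        G.paSet (⋃ x ∈ T, G.disIn (G.ancSet T) x) = G.paSet T) := by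
  obtain ⟨v, rfl⟩ := hT
  have hbisymm : Symmetric G.bi := fun u w h => hG.1.1 u w h
  have hsymmRT : Symmetric (Relation.ReflTransGen G.bi) :=
    by haveI : Std.Symm G.bi := ⟨hbisymm⟩; exact fun a b h => Std.Symm.symm a b h
  -- core fact: no two distinct vertices of the chain component are in ancestor relation
  have key1 : ∀ x ∈ G.chainComp v, ∀ y ∈ G.chainComp v, G.anc x y → x = y := by
    intro x hx y hy hxy
    by_contra hne
    have hx' : Relation.ReflTransGen G.bi v x := hx
    have hy' : Relation.ReflTransGen G.bi v y := hy
    rcases (hxy : Relation.ReflTransGen G.dir x y).cases_head with rfl | ⟨c, hdir, hcy⟩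
    · exact hne rfl
    · refine MixedGraph.no_return hG hdir ?_
      have h1 : Relation.ReflTransGen (fun u w => G.dir u w ∨ G.bi u w) c y :=
        Relation.ReflTransGen.mono (fun _ _ h => Or.inl h) _ _ hcy
      have h2 : Relation.ReflTransGen (fun u w => G.dir u w ∨ G.bi u w) y x :=
        Relation.ReflTransGen.mono (fun _ _ h => Or.inr h) _ _ ((hsymmRT hy').trans hx')
      exact h1.trans h2
  -- the district of any x ∈ T inside an(T) stays inside T
  have hclosure : ∀ x ∈ G.chainComp v, ∀ z,
      G.biConnIn (G.ancSet (G.chainComp v)) x z → z ∈ G.chainComp v := by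
    intro x hx z hz
    have hz' : Relation.ReflTransGen
        (fun a b => a ∈ G.ancSet (G.chainComp v) ∧ b ∈ G.ancSet (G.chainComp v) ∧ G.bi a b)
        x z := hz
    clear hz
    induction hz' with
    | refl => exact hx
    | @tail c z hxc hstep ih =>
      obtain ⟨hcA, hzA, hbi⟩ := hstep
      obtain ⟨s, hs, hanc⟩ := hzA
      rcases (hanc : Relation.ReflTransGen G.dir z s).cases_head with rfl | ⟨z₁, hdir, hz₁s⟩
      · exact hs
      · exfalso
        refine MixedGraph.no_return hG hdir ?_
        have h1 : Relation.ReflTransGen (fun u w => G.dir u w ∨ G.bi u w) z₁ s :=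
          Relation.ReflTransGen.mono (fun _ _ h => Or.inl h) _ _ hz₁s
        have hsc : Relation.ReflTransGen G.bi s c :=
          (hsymmRT (hs : Relation.ReflTransGen G.bi v s)).trans
            (ih : Relation.ReflTransGen G.bi v c)
        have h2 : Relation.ReflTransGen (fun u w => G.dir u w ∨ G.bi u w) s c :=
          Relation.ReflTransGen.mono (fun _ _ h => Or.inr h) _ _ hsc
        exact h1.trans (h2.trans (Relation.ReflTransGen.single (Or.inr hbi)))
  -- bi-connectivity within T lifts to bi-connectivity within an(T)
  have hlift : ∀ y, G.biConn v y → G.biConnIn (G.ancSet (G.chainComp v)) v y := by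
    intro y hy
    have hy' : Relation.ReflTransGen G.bi v y := hy
    clear hy
    induction hy' with
    | refl => exact Relation.ReflTransGen.refl
    | @tail c y hvc hbi ih =>
      refine Relation.ReflTransGen.tail ih ⟨⟨c, hvc, Relation.ReflTransGen.refl⟩,
        ⟨y, Relation.ReflTransGen.tail hvc hbi, Relation.ReflTransGen.refl⟩, hbi⟩
  refine ⟨?_, ⟨v, fun y hy => hlift y hy⟩, ?_, ?_⟩
  · intro x hx
    ext y
    constructor
    · rintro ⟨hanc, hyT⟩
      exact (key1 x hx y hyT hanc).symm
    · rintro rfl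
      exact ⟨Relation.ReflTransGen.refl, hx⟩
  · apply Set.Subset.antisymm
    · intro z hz
      rw [Set.mem_iUnion₂] at hz
      obtain ⟨x, hx, hzx⟩ := hz
      exact hclosure x hx z hzx
    · intro z hz
      exact Set.mem_iUnion₂.mpr ⟨z, hz, Relation.ReflTransGen.refl⟩
  · have h3 : (⋃ x ∈ G.chainComp v, G.disIn (G.ancSet (G.chainComp v)) x) = G.chainComp v := by
      apply Set.Subset.antisymm
      · intro z hz
        rw [Set.mem_iUnion₂] at hz
        obtain ⟨x, hx, hzx⟩ := hz
        exact hclosure x hx z hzx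
      · intro z hz
        exact Set.mem_iUnion₂.mpr ⟨z, hz, Relation.ReflTransGen.refl⟩
    rw [h3]
    simp
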